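/- Let R be a commutative ring with unity and let φ, φ* be invertible skew-symmetric matrices of size 2n over R such that φ = (1 ⊥ ε)^t φ* (1 ⊥ ε) for some ε ∈ E_{2n−1}(R). Then Sp_φ(R) = (1 ⊥ ε)^{−1} Sp_{φ*}(R) (1 ⊥ ε) and ESp_φ(R) = (1 ⊥ ε)^{−1} ESp_{φ*}(R) (1 ⊥ ε). -/

import Mathlib

/- Common definitions: symplectic groups with respect to an invertible
   skew-symmetric (alternating) matrix, elementary symplectic groups,
   Pfaffian, standard symplectic matrix, elementary linear groups. -/

namespace PaperESp

open Matrix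

variable {R : Type*} [CommRing R]

/-- The Pfaffian of a `2n × 2n` matrix, as the sum over perfect matchings. -/
def pf {n : ℕ} (A : Matrix (Fin (2*n)) (Fin (2*n)) R) : R :=
  ∑ σ ∈ Finset.univ.filter (fun σ : Equiv.Perm (Fin (2*n)) =>
      (∀ k : Fin n, (σ ⟨2*k.1, by have := k.2; omega⟩).1 < (σ ⟨2*k.1+1, by have := k.2; omega⟩).1) ∧
      (∀ k l : Fin n, k < l →
        (σ ⟨2*k.1, by have := k.2; omega⟩).1 < (σ ⟨2*l.1, by have := l.2; omega⟩).1)),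
    ((Equiv.Perm.sign σ : ℤ) : R) *
      ∏ k : Fin n, A (σ ⟨2*k.1, by have := k.2; omega⟩) (σ ⟨2*k.1+1, by have := k.2; omega⟩)

/-- `φ = [[0, -cᵀ],[c, ν]]`: the column `c`. -/
def cvec {n : ℕ} (φ : Matrix (Fin (2*n)) (Fin (2*n)) R) : Fin (2*n-1) → R :=
  fun i => φ ⟨i.1+1, by have := i.2; omega⟩ ⟨0, by have := i.2; omega⟩

/-- `φ = [[0, -cᵀ],[c, ν]]`: the block `ν`. -/
def nuMat {n : ℕ} (φ : Matrix (Fin (2*n)) (Fin (2*n)) R) :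
    Matrix (Fin (2*n-1)) (Fin (2*n-1)) R :=
  Matrix.of fun i j => φ ⟨i.1+1, by have := i.2; omega⟩ ⟨j.1+1, by have := j.2; omega⟩

/-- `φ⁻¹ = [[0, dᵀ],[-d, μ]]`: the row `d`. -/
noncomputable def dvec {n : ℕ} (φ : Matrix (Fin (2*n)) (Fin (2*n)) R) : Fin (2*n-1) → R :=
  fun i => φ⁻¹ ⟨0, by have := i.2; omega⟩ ⟨i.1+1, by have := i.2; omega⟩

/-- `φ⁻¹ = [[0, dᵀ],[-d, μ]]`: the block `μ`. -/
noncomputable def muMat {n : ℕ} (φ : Matrix (Fin (2*n)) (Fin (2*n)) R) :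
    Matrix (Fin (2*n-1)) (Fin (2*n-1)) R :=
  Matrix.of fun i j => φ⁻¹ ⟨i.1+1, by have := i.2; omega⟩ ⟨j.1+1, by have := j.2; omega⟩

/-- Vaserstein's matrix `α_φ(v) = I + d vᵀ ν`. -/
noncomputable def alphaMat {n : ℕ} (φ : Matrix (Fin (2*n)) (Fin (2*n)) R) (v : Fin (2*n-1) → R) :
    Matrix (Fin (2*n-1)) (Fin (2*n-1)) R :=
  1 + Matrix.of fun i j => dvec φ i * ∑ k, v k * nuMat φ k j

/-- Vaserstein's matrix `β_φ(v) = I + μ v cᵀ`. -/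
noncomputable def betaMat {n : ℕ} (φ : Matrix (Fin (2*n)) (Fin (2*n)) R) (v : Fin (2*n-1) → R) :
    Matrix (Fin (2*n-1)) (Fin (2*n-1)) R :=
  1 + Matrix.of fun i j => (∑ k, muMat φ i k * v k) * cvec φ j

/-- The generator `C_φ(v) = [[1, 0],[v, α_φ(v)]]`. -/
noncomputable def Cmat {n : ℕ} (φ : Matrix (Fin (2*n)) (Fin (2*n)) R) (v : Fin (2*n-1) → R) :
    Matrix (Fin (2*n)) (Fin (2*n)) R :=
  Matrix.of fun i j =>
    if hi : i.1 = 0 then (if j.1 = 0 then (1:R) else 0)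
    else if hj : j.1 = 0 then v ⟨i.1-1, by have := i.2; omega⟩
    else alphaMat φ v ⟨i.1-1, by have := i.2; omega⟩ ⟨j.1-1, by have := j.2; omega⟩

/-- The generator `R_φ(v) = [[1, vᵀ],[0, β_φ(v)]]`. -/
noncomputable def Rmat {n : ℕ} (φ : Matrix (Fin (2*n)) (Fin (2*n)) R) (v : Fin (2*n-1) → R) :
    Matrix (Fin (2*n)) (Fin (2*n)) R :=
  Matrix.of fun i j =>
    if hi : i.1 = 0 then (if hj : j.1 = 0 then (1:R) else v ⟨j.1-1, by have := j.2; omega⟩)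
    else if hj : j.1 = 0 then 0
    else betaMat φ v ⟨i.1-1, by have := i.2; omega⟩ ⟨j.1-1, by have := j.2; omega⟩

/-- The symplectic group `Sp_φ(R) = {α ∈ GL_m(R) | αᵀ φ α = φ}`, as a subgroup of the
    units of the matrix ring. -/
def Sp {m : ℕ} (φ : Matrix (Fin m) (Fin m) R) : Subgroup (Matrix (Fin m) (Fin m) R)ˣ where
  carrier := {g | (↑g : Matrix (Fin m) (Fin m) R)ᵀ * φ * (↑g : Matrix (Fin m) (Fin m) R) = φ}
  one_mem' := by simp
  mul_mem' := by
    intro a b ha hb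
    simp only [Set.mem_setOf_eq, Units.val_mul] at *
    have h : ((↑a : Matrix (Fin m) (Fin m) R) * (↑b : Matrix (Fin m) (Fin m) R))ᵀ * φ *
          ((↑a : Matrix (Fin m) (Fin m) R) * (↑b : Matrix (Fin m) (Fin m) R))
        = (↑b : Matrix (Fin m) (Fin m) R)ᵀ *
            ((↑a : Matrix (Fin m) (Fin m) R)ᵀ * φ * (↑a : Matrix (Fin m) (Fin m) R)) *
            (↑b : Matrix (Fin m) (Fin m) R) := by
      simp only [Matrix.transpose_mul, Matrix.mul_assoc]
    rw [h, ha, hb]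
  inv_mem' := by
    intro a ha
    simp only [Set.mem_setOf_eq] at *
    have h : (↑a⁻¹ : Matrix (Fin m) (Fin m) R)ᵀ * φ * (↑a⁻¹ : Matrix (Fin m) (Fin m) R)
        = (↑a⁻¹ : Matrix (Fin m) (Fin m) R)ᵀ *
            ((↑a : Matrix (Fin m) (Fin m) R)ᵀ * φ * (↑a : Matrix (Fin m) (Fin m) R)) *
            (↑a⁻¹ : Matrix (Fin m) (Fin m) R) := by
      rw [ha]
    rw [h]
    have h2 : (↑a⁻¹ : Matrix (Fin m) (Fin m) R)ᵀ *
          ((↑a : Matrix (Fin m) (Fin m) R)ᵀ * φ * (↑a : Matrix (Fin m) (Fin m) R)) *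
          (↑a⁻¹ : Matrix (Fin m) (Fin m) R)
        = ((↑a : Matrix (Fin m) (Fin m) R) * (↑a⁻¹ : Matrix (Fin m) (Fin m) R))ᵀ * φ *
          ((↑a : Matrix (Fin m) (Fin m) R) * (↑a⁻¹ : Matrix (Fin m) (Fin m) R)) := by
      simp only [Matrix.transpose_mul, Matrix.mul_assoc]
    rw [h2, Units.mul_inv]
    simp

/-- The elementary symplectic group `ESp_φ(R)` with respect to `φ`, generated by the
    `C_φ(v)` and `R_φ(v)`. -/
def Esp {n : ℕ} (φ : Matrix (Fin (2*n)) (Fin (2*n)) R) :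
    Subgroup (Matrix (Fin (2*n)) (Fin (2*n)) R)ˣ :=
  Subgroup.closure {g | ∃ v : Fin (2*n-1) → R,
    (↑g : Matrix (Fin (2*n)) (Fin (2*n)) R) = Cmat φ v ∨
    (↑g : Matrix (Fin (2*n)) (Fin (2*n)) R) = Rmat φ v}

/-- `ESp_φ(I)`, generated by the `C_φ(v)`, `R_φ(v)` with `v ∈ I^{2n-1}`. -/
def EspIdeal {n : ℕ} (φ : Matrix (Fin (2*n)) (Fin (2*n)) R) (I : Ideal R) :
    Subgroup (Matrix (Fin (2*n)) (Fin (2*n)) R)ˣ :=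
  Subgroup.closure {g | ∃ v : Fin (2*n-1) → R, (∀ i, v i ∈ I) ∧
    ((↑g : Matrix (Fin (2*n)) (Fin (2*n)) R) = Cmat φ v ∨
     (↑g : Matrix (Fin (2*n)) (Fin (2*n)) R) = Rmat φ v)}

/-- The relative elementary symplectic group `ESp_φ(R,I)`: the normal closure of
    `ESp_φ(I)` in `ESp_φ(R)`. -/
def REsp {n : ℕ} (φ : Matrix (Fin (2*n)) (Fin (2*n)) R) (I : Ideal R) :
    Subgroup (Matrix (Fin (2*n)) (Fin (2*n)) R)ˣ :=
  Subgroup.closure {g | ∃ e ∈ Esp φ, ∃ x ∈ EspIdeal φ I, g = e * x * e⁻¹}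

/-- The standard skew-symmetric matrix `ψ_n = Σ (e_{2i-1,2i} - e_{2i,2i-1})` (1-based). -/
def psi (R : Type*) [CommRing R] (n : ℕ) : Matrix (Fin (2*n)) (Fin (2*n)) R :=
  Matrix.of fun i j =>
    if i.1 + 1 = j.1 ∧ j.1 % 2 = 1 then (1:R)
    else if j.1 + 1 = i.1 ∧ i.1 % 2 = 1 then -1
    else 0

/-- The permutation `σ` of `{1,…,2n}` with `σ(2i-1) = 2i`, `σ(2i) = 2i-1` (0-based swap of
    `2i ↔ 2i+1`). -/
def sigmaFn (n : ℕ) (i : Fin (2*n)) : Fin (2*n) :=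
  if h : i.1 % 2 = 0 then ⟨i.1+1, by have := i.2; omega⟩ else ⟨i.1-1, by have := i.2; omega⟩

/-- The elementary symplectic generators `se_{ij}(a)`. -/
def seMat {R : Type*} [CommRing R] (n : ℕ) (i j : Fin (2*n)) (a : R) :
    Matrix (Fin (2*n)) (Fin (2*n)) R :=
  if i = sigmaFn n j then 1 + Matrix.single i j a
  else 1 + Matrix.single i j a
         - Matrix.single (sigmaFn n j) (sigmaFn n i) ((-1:R)^(i.1+j.1) * a)

/-- The elementary symplectic group `ESp_{2n}(R)`. -/
def Esp2n (R : Type*) [CommRing R] (n : ℕ) : Subgroup (Matrix (Fin (2*n)) (Fin (2*n)) R)ˣ :=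
  Subgroup.closure {g | ∃ i j : Fin (2*n), ∃ a : R, i ≠ j ∧
    (↑g : Matrix (Fin (2*n)) (Fin (2*n)) R) = seMat n i j a}

/-- `ESp_{2n}(I)`. -/
def Esp2nIdeal (R : Type*) [CommRing R] (n : ℕ) (I : Ideal R) :
    Subgroup (Matrix (Fin (2*n)) (Fin (2*n)) R)ˣ :=
  Subgroup.closure {g | ∃ i j : Fin (2*n), ∃ x : R, i ≠ j ∧ x ∈ I ∧
    (↑g : Matrix (Fin (2*n)) (Fin (2*n)) R) = seMat n i j x}

/-- The relative elementary symplectic group `ESp_{2n}(R,I)`: the normal closure of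
    `ESp_{2n}(I)` in `ESp_{2n}(R)`. -/
def REsp2n (R : Type*) [CommRing R] (n : ℕ) (I : Ideal R) :
    Subgroup (Matrix (Fin (2*n)) (Fin (2*n)) R)ˣ :=
  Subgroup.closure {g | ∃ e ∈ Esp2n R n, ∃ x ∈ Esp2nIdeal R n I, g = e * x * e⁻¹}

/-- The elementary linear group `E_m(R)`. -/
def Egrp (R : Type*) [CommRing R] (m : ℕ) : Subgroup (Matrix (Fin m) (Fin m) R)ˣ :=
  Subgroup.closure {g | ∃ i j : Fin m, ∃ a : R, i ≠ j ∧
    (↑g : Matrix (Fin m) (Fin m) R) = 1 + Matrix.single i j a}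

/-- `E_m(I)`. -/
def EgrpIdeal (R : Type*) [CommRing R] (m : ℕ) (I : Ideal R) :
    Subgroup (Matrix (Fin m) (Fin m) R)ˣ :=
  Subgroup.closure {g | ∃ i j : Fin m, ∃ x : R, i ≠ j ∧ x ∈ I ∧
    (↑g : Matrix (Fin m) (Fin m) R) = 1 + Matrix.single i j x}

/-- The relative elementary linear group `E_m(R,I)`: the normal closure of `E_m(I)`
    in `E_m(R)`. -/
def REgrp (R : Type*) [CommRing R] (m : ℕ) (I : Ideal R) :
    Subgroup (Matrix (Fin m) (Fin m) R)ˣ :=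
  Subgroup.closure {g | ∃ e ∈ Egrp R m, ∃ x ∈ EgrpIdeal R m I, g = e * x * e⁻¹}

/-- `1 ⊥ β`: the block diagonal matrix `diag(1, β)` of size `2n`. -/
def onePerp {n : ℕ} (β : Matrix (Fin (2*n-1)) (Fin (2*n-1)) R) :
    Matrix (Fin (2*n)) (Fin (2*n)) R :=
  Matrix.of fun i j =>
    if hi : i.1 = 0 then (if j.1 = 0 then (1:R) else 0)
    else if hj : j.1 = 0 then 0
    else β ⟨i.1-1, by have := i.2; omega⟩ ⟨j.1-1, by have := j.2; omega⟩

/-- The congruence kernel: invertible matrices reducing to the identity modulo `I`. -/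
def congrKer (R : Type*) [CommRing R] (m : ℕ) (I : Ideal R) :
    Subgroup (Matrix (Fin m) (Fin m) R)ˣ :=
  (Units.map ((Ideal.Quotient.mk I).mapMatrix.toMonoidHom :
      Matrix (Fin m) (Fin m) R →* Matrix (Fin m) (Fin m) (R ⧸ I))).ker

/-- `Sp_φ(R,I)`: the kernel of the reduction map `Sp_φ(R) → Sp_φ(R/I)`. -/
def SpRel {m : ℕ} (φ : Matrix (Fin m) (Fin m) R) (I : Ideal R) :
    Subgroup (Matrix (Fin m) (Fin m) R)ˣ :=
  Sp φ ⊓ congrKer R m I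



set_option linter.unusedSectionVars false

section Aux

variable {n : ℕ}

private lemma sum_split {M : Type*} [AddCommMonoid M] (hn : 0 < n) (f : Fin (2*n) → M) :
    ∑ k, f k = f ⟨0, by omega⟩ + ∑ k : Fin (2*n-1), f ⟨k.1+1, by have := k.2; omega⟩ := by
  have h : 2*n - 1 + 1 = 2*n := by omega
  rw [← (finCongr h).sum_comp f, Fin.sum_univ_succ]
  congr 1

private def blk (x : R) (r u : Fin (2*n-1) → R) (β : Matrix (Fin (2*n-1)) (Fin (2*n-1)) R) :
    Matrix (Fin (2*n)) (Fin (2*n)) R :=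
  Matrix.of fun i j =>
    if i.1 = 0 then (if j.1 = 0 then x else r ⟨j.1-1, by have := j.2; omega⟩)
    else if j.1 = 0 then u ⟨i.1-1, by have := i.2; omega⟩
    else β ⟨i.1-1, by have := i.2; omega⟩ ⟨j.1-1, by have := j.2; omega⟩

private lemma onePerp_eq_blk (β : Matrix (Fin (2*n-1)) (Fin (2*n-1)) R) :
    onePerp (n := n) β = blk 1 0 0 β := by
  ext i j
  simp only [onePerp, blk, Matrix.of_apply]
  split_ifs <;> simp

private lemma blk_one : blk (1:R) 0 0 1 = (1 : Matrix (Fin (2*n)) (Fin (2*n)) R) := by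
  ext ⟨i, hi⟩ ⟨j, hj⟩
  rcases i with _|i <;> rcases j with _|j <;>
    simp [blk, Matrix.one_apply, Fin.ext_iff]

private lemma blk_mul (x x' : R) (r r' u u' : Fin (2*n-1) → R)
    (β β' : Matrix (Fin (2*n-1)) (Fin (2*n-1)) R) :
    blk x r u β * blk x' r' u' β' =
      blk (x*x' + r ⬝ᵥ u') (x • r' + r ᵥ* β') (x' • u + β *ᵥ u')
        (Matrix.vecMulVec u r' + β * β') := by
  ext ⟨i, hi⟩ ⟨j, hj⟩
  have hn : 0 < n := by omega
  rw [Matrix.mul_apply, sum_split hn]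
  rcases i with _|i <;> rcases j with _|j <;>
    simp [blk, dotProduct, Matrix.vecMul, Matrix.mulVec, Matrix.vecMulVec,
      Matrix.mul_apply, mul_comm]

private lemma zero_vmv (v : Fin (2*n-1) → R) :
    Matrix.vecMulVec (0 : Fin (2*n-1) → R) v = 0 := by
  ext i j; simp [Matrix.vecMulVec]

private lemma vmv_zero (u : Fin (2*n-1) → R) :
    Matrix.vecMulVec u (0 : Fin (2*n-1) → R) = 0 := by
  ext i j; simp [Matrix.vecMulVec]

private lemma mul_vmv (M : Matrix (Fin (2*n-1)) (Fin (2*n-1)) R) (u v : Fin (2*n-1) → R) :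
    M * Matrix.vecMulVec u v = Matrix.vecMulVec (M *ᵥ u) v := by
  ext i j
  simp [Matrix.mul_apply, Matrix.vecMulVec, Matrix.mulVec, dotProduct,
    Finset.sum_mul, mul_assoc]

private lemma vmv_mul (u v : Fin (2*n-1) → R) (M : Matrix (Fin (2*n-1)) (Fin (2*n-1)) R) :
    Matrix.vecMulVec u v * M = Matrix.vecMulVec u (v ᵥ* M) := by
  ext i j
  simp [Matrix.mul_apply, Matrix.vecMulVec, Matrix.vecMul, dotProduct,
    Finset.mul_sum, mul_assoc]

private lemma onePerp_mul (x y : Matrix (Fin (2*n-1)) (Fin (2*n-1)) R) :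
    onePerp (n := n) x * onePerp y = onePerp (x * y) := by
  simp [onePerp_eq_blk, blk_mul, zero_vmv]

private lemma onePerp_one : onePerp (n := n) (1 : Matrix (Fin (2*n-1)) (Fin (2*n-1)) R) = 1 := by
  rw [onePerp_eq_blk]; exact blk_one

private lemma onePerp_transpose (β : Matrix (Fin (2*n-1)) (Fin (2*n-1)) R) :
    (onePerp (n := n) β)ᵀ = onePerp βᵀ := by
  ext ⟨i, hi⟩ ⟨j, hj⟩
  rcases i with _|i <;> rcases j with _|j <;>
    simp [onePerp, Matrix.transpose_apply]

/-- the row `r` of a `2n`-matrix written as `[[x, rᵀ],[u, β]]`. -/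
private def rvec (M : Matrix (Fin (2*n)) (Fin (2*n)) R) : Fin (2*n-1) → R :=
  fun i => M ⟨0, by have := i.2; omega⟩ ⟨i.1+1, by have := i.2; omega⟩

private lemma blk_decomp (hn : 0 < n) (M : Matrix (Fin (2*n)) (Fin (2*n)) R) :
    M = blk (M ⟨0, by omega⟩ ⟨0, by omega⟩) (rvec M) (cvec M) (nuMat M) := by
  ext ⟨i, hi⟩ ⟨j, hj⟩
  rcases i with _|i <;> rcases j with _|j <;>
    simp [blk, rvec, cvec, nuMat]

private lemma sandwich_blk (hn : 0 < n) (p q : Matrix (Fin (2*n-1)) (Fin (2*n-1)) R)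
    (M : Matrix (Fin (2*n)) (Fin (2*n)) R) :
    onePerp p * M * onePerp q =
      blk (M ⟨0, by omega⟩ ⟨0, by omega⟩) (rvec M ᵥ* q) (p *ᵥ cvec M) (p * nuMat M * q) := by
  conv_lhs => rw [blk_decomp hn M]
  rw [onePerp_eq_blk, onePerp_eq_blk, blk_mul, blk_mul]
  simp [zero_vmv, vmv_zero, Matrix.mul_assoc]

private lemma cvec_eq_of {φ : Matrix (Fin (2*n)) (Fin (2*n)) R} {x : R}
    {r u : Fin (2*n-1) → R} {β : Matrix (Fin (2*n-1)) (Fin (2*n-1)) R}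
    (h : φ = blk x r u β) : cvec φ = u := by
  subst h; funext i; simp [cvec, blk]

private lemma rvec_eq_of {φ : Matrix (Fin (2*n)) (Fin (2*n)) R} {x : R}
    {r u : Fin (2*n-1) → R} {β : Matrix (Fin (2*n-1)) (Fin (2*n-1)) R}
    (h : φ = blk x r u β) : rvec φ = r := by
  subst h; funext i; simp [rvec, blk]

private lemma nuMat_eq_of {φ : Matrix (Fin (2*n)) (Fin (2*n)) R} {x : R}
    {r u : Fin (2*n-1) → R} {β : Matrix (Fin (2*n-1)) (Fin (2*n-1)) R}
    (h : φ = blk x r u β) : nuMat φ = β := by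
  subst h; ext i j; simp [nuMat, blk]

private lemma alphaMat_eq (φ : Matrix (Fin (2*n)) (Fin (2*n)) R) (v : Fin (2*n-1) → R) :
    alphaMat φ v = 1 + Matrix.vecMulVec (dvec φ) (v ᵥ* nuMat φ) := by
  unfold alphaMat
  congr 1

private lemma betaMat_eq (φ : Matrix (Fin (2*n)) (Fin (2*n)) R) (v : Fin (2*n-1) → R) :
    betaMat φ v = 1 + Matrix.vecMulVec (muMat φ *ᵥ v) (cvec φ) := by
  unfold betaMat
  congr 1

private lemma mem_Sp {m : ℕ} {φ : Matrix (Fin m) (Fin m) R}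
    {g : (Matrix (Fin m) (Fin m) R)ˣ} :
    g ∈ Sp φ ↔ (↑g : Matrix (Fin m) (Fin m) R)ᵀ * φ * (↑g : Matrix (Fin m) (Fin m) R) = φ :=
  Iff.rfl

private lemma sp_conj {m : ℕ} (A B φ φs X : Matrix (Fin m) (Fin m) R)
    (hAB : A * B = 1) (hBA : B * A = 1) (hrel : φ = Aᵀ * φs * A) :
    Xᵀ * φ * X = φ ↔ (A * X * B)ᵀ * φs * (A * X * B) = φs := by
  constructor
  · intro h
    have e1 : (A*X*B)ᵀ * φs * (A*X*B) = Bᵀ * (Xᵀ * φ * X) * B := by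
      rw [hrel]; simp only [Matrix.transpose_mul, Matrix.mul_assoc]
    rw [e1, h, hrel]
    calc Bᵀ * (Aᵀ * φs * A) * B = (A*B)ᵀ * φs * (A*B) := by
          simp only [Matrix.transpose_mul, Matrix.mul_assoc]
      _ = φs := by rw [hAB]; simp
  · intro h
    have e2 : Xᵀ * φ * X = Aᵀ * ((A*X*B)ᵀ * φs * (A*X*B)) * A := by
      rw [hrel]
      simp only [Matrix.transpose_mul, Matrix.mul_assoc]
      rw [hBA, mul_one, ← Matrix.mul_assoc Aᵀ Bᵀ, ← Matrix.transpose_mul, hBA,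
        Matrix.transpose_one, one_mul]
    rw [e2, h]
    exact hrel.symm

end Aux

/-- if `φ = (1 ⊥ ε)ᵀ φ* (1 ⊥ ε)` with `ε ∈ E_{2n-1}(R)`, then
`Sp_φ(R) = (1 ⊥ ε)⁻¹ Sp_{φ*}(R) (1 ⊥ ε)` and `ESp_φ(R) = (1 ⊥ ε)⁻¹ ESp_{φ*}(R) (1 ⊥ ε)`. -/
theorem sp_esp_conjugation {R : Type*} [CommRing R] (n : ℕ)
    (φ φstar : Matrix (Fin (2*n)) (Fin (2*n)) R)
    (hskew : φᵀ = -φ) (hinv : IsUnit φ)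
    (hskewstar : φstarᵀ = -φstar) (hinvstar : IsUnit φstar)
    (ε : (Matrix (Fin (2*n-1)) (Fin (2*n-1)) R)ˣ) (hε : ε ∈ Egrp R (2*n-1))
    (hrel : φ = (onePerp (n := n) (ε : Matrix (Fin (2*n-1)) (Fin (2*n-1)) R))ᵀ * φstar *
        onePerp (n := n) (ε : Matrix (Fin (2*n-1)) (Fin (2*n-1)) R)) :
    (∀ g : (Matrix (Fin (2*n)) (Fin (2*n)) R)ˣ, g ∈ Sp φ ↔
      ∃ h ∈ Sp φstar, (g : Matrix (Fin (2*n)) (Fin (2*n)) R) =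
        onePerp (n := n) ((ε⁻¹ : (Matrix (Fin (2*n-1)) (Fin (2*n-1)) R)ˣ) :
            Matrix (Fin (2*n-1)) (Fin (2*n-1)) R) *
          (h : Matrix (Fin (2*n)) (Fin (2*n)) R) *
          onePerp (n := n) (ε : Matrix (Fin (2*n-1)) (Fin (2*n-1)) R)) ∧
    (∀ g : (Matrix (Fin (2*n)) (Fin (2*n)) R)ˣ, g ∈ Esp φ ↔
      ∃ h ∈ Esp φstar, (g : Matrix (Fin (2*n)) (Fin (2*n)) R) =
        onePerp (n := n) ((ε⁻¹ : (Matrix (Fin (2*n-1)) (Fin (2*n-1)) R)ˣ) :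
            Matrix (Fin (2*n-1)) (Fin (2*n-1)) R) *
          (h : Matrix (Fin (2*n)) (Fin (2*n)) R) *
          onePerp (n := n) (ε : Matrix (Fin (2*n-1)) (Fin (2*n-1)) R)) := by
  rcases Nat.eq_zero_or_pos n with rfl | hn
  · have hm : ∀ (X Y : Matrix (Fin (2*0)) (Fin (2*0)) R), X = Y := by
      intro X Y; ext i j; exact absurd i.2 (by omega)
    have hu : ∀ g : (Matrix (Fin (2*0)) (Fin (2*0)) R)ˣ, g = 1 := fun g => Units.ext (hm _ _)
    constructor <;> intro g <;> constructor
    · intro _; exact ⟨1, one_mem _, hm _ _⟩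
    · intro _; exact mem_Sp.mpr (hm _ _)
    · intro _; exact ⟨1, one_mem _, hm _ _⟩
    · intro _; rw [hu g]; exact one_mem _
  set A : Matrix (Fin (2*n-1)) (Fin (2*n-1)) R := (ε : Matrix (Fin (2*n-1)) (Fin (2*n-1)) R)
    with hA
  set B : Matrix (Fin (2*n-1)) (Fin (2*n-1)) R :=
    ((ε⁻¹ : (Matrix (Fin (2*n-1)) (Fin (2*n-1)) R)ˣ) : Matrix (Fin (2*n-1)) (Fin (2*n-1)) R)
    with hB
  have hab : A * B = 1 := ε.mul_inv
  have hba : B * A = 1 := ε.inv_mul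
  have hEE : onePerp (n := n) A * onePerp B = 1 := by rw [onePerp_mul, hab, onePerp_one]
  have hEE' : onePerp (n := n) B * onePerp A = 1 := by rw [onePerp_mul, hba, onePerp_one]
  -- block decomposition of φ and φ⁻¹
  have hφd : φ = blk (φstar ⟨0, by omega⟩ ⟨0, by omega⟩) (rvec φstar ᵥ* A) (Aᵀ *ᵥ cvec φstar)
      (Aᵀ * nuMat φstar * A) := by
    rw [hrel, onePerp_transpose]; exact sandwich_blk hn Aᵀ A φstar
  have hc : cvec φ = Aᵀ *ᵥ cvec φstar := cvec_eq_of hφd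
  have hν : nuMat φ = Aᵀ * nuMat φstar * A := nuMat_eq_of hφd
  have hsdet : IsUnit φstar.det := (Matrix.isUnit_iff_isUnit_det _).mp hinvstar
  have hφinv : φ⁻¹ = onePerp B * φstar⁻¹ * onePerp Bᵀ := by
    apply Matrix.inv_eq_right_inv
    rw [hrel, onePerp_transpose]
    calc onePerp Aᵀ * φstar * onePerp A * (onePerp B * φstar⁻¹ * onePerp Bᵀ)
        = onePerp Aᵀ * (φstar * ((onePerp A * onePerp B) * (φstar⁻¹ * onePerp Bᵀ))) := by
          simp only [Matrix.mul_assoc]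
      _ = onePerp Aᵀ * ((φstar * φstar⁻¹) * onePerp Bᵀ) := by
          rw [hEE, one_mul, Matrix.mul_assoc]
      _ = 1 := by
          rw [Matrix.mul_nonsing_inv _ hsdet, one_mul, onePerp_mul, ← Matrix.transpose_mul,
            hba, Matrix.transpose_one, onePerp_one]
  have hφinvd : φ⁻¹ = blk (φstar⁻¹ ⟨0, by omega⟩ ⟨0, by omega⟩) (rvec φstar⁻¹ ᵥ* Bᵀ)
      (B *ᵥ cvec φstar⁻¹) (B * nuMat φstar⁻¹ * Bᵀ) := by
    rw [hφinv]; exact sandwich_blk hn B Bᵀ φstar⁻¹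
  have hd : dvec φ = B *ᵥ dvec φstar := by
    have h1 : dvec φ = rvec (φ⁻¹) := rfl
    rw [h1, rvec_eq_of hφinvd, Matrix.vecMul_transpose]
    rfl
  have hμ : muMat φ = B * muMat φstar * Bᵀ := by
    have h1 : muMat φ = nuMat (φ⁻¹) := rfl
    rw [h1, nuMat_eq_of hφinvd]
    rfl
  -- conjugation identities for α, β, C, R
  have halpha : ∀ v, alphaMat φ v = B * alphaMat φstar (A *ᵥ v) * A := by
    intro v
    rw [alphaMat_eq, alphaMat_eq, hd, hν, mul_add, mul_one, add_mul, hba, mul_vmv, vmv_mul,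
      ← Matrix.vecMul_vecMul, ← Matrix.vecMul_vecMul, Matrix.vecMul_transpose]
  have hbeta : ∀ v, betaMat φ v = B * betaMat φstar (Bᵀ *ᵥ v) * A := by
    intro v
    rw [betaMat_eq, betaMat_eq, hμ, hc, mul_add, mul_one, add_mul, hba, mul_vmv, vmv_mul,
      Matrix.mulVec_mulVec, Matrix.mulVec_mulVec, Matrix.mulVec_transpose]
  have hCblk : ∀ (ψ : Matrix (Fin (2*n)) (Fin (2*n)) R) v,
      Cmat ψ v = blk 1 0 v (alphaMat ψ v) := by
    intro ψ v; ext i j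
    simp only [Cmat, blk, Matrix.of_apply]
    split_ifs <;> simp
  have hRblk : ∀ (ψ : Matrix (Fin (2*n)) (Fin (2*n)) R) v,
      Rmat ψ v = blk 1 v 0 (betaMat ψ v) := by
    intro ψ v; ext i j
    simp only [Rmat, blk, Matrix.of_apply]
    split_ifs <;> simp
  have hCrel : ∀ v, Cmat φ v = onePerp B * Cmat φstar (A *ᵥ v) * onePerp A := by
    intro v
    rw [hCblk, hCblk, halpha, onePerp_eq_blk, onePerp_eq_blk, blk_mul, blk_mul]
    simp [zero_vmv, vmv_zero, Matrix.mulVec_mulVec, hba, Matrix.mul_assoc]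
  have hRrel : ∀ v, Rmat φ v = onePerp B * Rmat φstar (Bᵀ *ᵥ v) * onePerp A := by
    intro v
    rw [hRblk, hRblk, hbeta, onePerp_eq_blk, onePerp_eq_blk, blk_mul, blk_mul]
    simp [zero_vmv, vmv_zero, hba, Matrix.mul_assoc, Matrix.mulVec_transpose,
      Matrix.vecMul_vecMul]
  -- the conjugating unit
  set Eu : (Matrix (Fin (2*n)) (Fin (2*n)) R)ˣ := ⟨onePerp A, onePerp B, hEE, hEE'⟩ with hEu
  have hEuv : (↑Eu : Matrix (Fin (2*n)) (Fin (2*n)) R) = onePerp A := rfl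
  have hEuinv : (↑Eu⁻¹ : Matrix (Fin (2*n)) (Fin (2*n)) R) = onePerp B := rfl
  have hsand : ∀ X : Matrix (Fin (2*n)) (Fin (2*n)) R,
      onePerp A * (onePerp B * X * onePerp A) * onePerp B = X := by
    intro X
    simp only [Matrix.mul_assoc]
    rw [hEE, mul_one, ← Matrix.mul_assoc, hEE, one_mul]
  have hsand' : ∀ X : Matrix (Fin (2*n)) (Fin (2*n)) R,
      onePerp B * (onePerp A * X * onePerp B) * onePerp A = X := by
    intro X
    simp only [Matrix.mul_assoc]
    rw [hEE', mul_one, ← Matrix.mul_assoc, hEE', one_mul]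
  have hx : ∀ g : (Matrix (Fin (2*n)) (Fin (2*n)) R)ˣ,
      (↑(MulAut.conj Eu g) : Matrix (Fin (2*n)) (Fin (2*n)) R) = onePerp A * (g : Matrix (Fin (2*n)) (Fin (2*n)) R) * onePerp B := by
    intro g
    simp [MulAut.conj_apply, Units.val_mul, hEuv, hEuinv]
  have hxs : ∀ g : (Matrix (Fin (2*n)) (Fin (2*n)) R)ˣ,
      (↑((MulAut.conj Eu).symm g) : Matrix (Fin (2*n)) (Fin (2*n)) R)
        = onePerp B * (g : Matrix (Fin (2*n)) (Fin (2*n)) R) * onePerp A := by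
    intro g
    simp [MulAut.conj_symm_apply, Units.val_mul, hEuv, hEuinv]
  -- Sp conjugation
  have hSp : ∀ g : (Matrix (Fin (2*n)) (Fin (2*n)) R)ˣ,
      g ∈ Sp φ ↔ MulAut.conj Eu g ∈ Sp φstar := by
    intro g
    rw [mem_Sp, mem_Sp, hx g]
    exact sp_conj (onePerp A) (onePerp B) φ φstar (↑g) hEE hEE' hrel
  -- Esp conjugation
  have hmap : (Esp φ).map (MulAut.conj Eu).toMonoidHom = Esp φstar := by
    unfold Esp
    rw [MonoidHom.map_closure]
    congr 1
    ext x
    constructor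
    · rintro ⟨g, ⟨v, hg⟩, rfl⟩
      rcases hg with hg | hg
      · refine ⟨A *ᵥ v, Or.inl ?_⟩
        show (↑(MulAut.conj Eu g) : Matrix (Fin (2*n)) (Fin (2*n)) R) = _
        rw [hx, hg, hCrel, hsand]
      · refine ⟨Bᵀ *ᵥ v, Or.inr ?_⟩
        show (↑(MulAut.conj Eu g) : Matrix (Fin (2*n)) (Fin (2*n)) R) = _
        rw [hx, hg, hRrel, hsand]
    · rintro ⟨w, hw⟩
      refine ⟨(MulAut.conj Eu).symm x, ?_, MulEquiv.apply_symm_apply _ _⟩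
      rcases hw with hw | hw
      · exact ⟨B *ᵥ w, Or.inl (by
          rw [hxs, hw, hCrel, Matrix.mulVec_mulVec, hab, Matrix.one_mulVec])⟩
      · exact ⟨Aᵀ *ᵥ w, Or.inr (by
          rw [hxs, hw, hRrel, Matrix.mulVec_mulVec, ← Matrix.transpose_mul, hab,
            Matrix.transpose_one, Matrix.one_mulVec])⟩
  have hEsp : ∀ g : (Matrix (Fin (2*n)) (Fin (2*n)) R)ˣ,
      g ∈ Esp φ ↔ MulAut.conj Eu g ∈ Esp φstar := by
    intro g
    rw [← hmap, Subgroup.mem_map_equiv, MulEquiv.symm_apply_apply]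
  -- packaging
  have pack : ∀ (H K : Subgroup (Matrix (Fin (2*n)) (Fin (2*n)) R)ˣ),
      (∀ x, x ∈ H ↔ MulAut.conj Eu x ∈ K) →
      ∀ g : (Matrix (Fin (2*n)) (Fin (2*n)) R)ˣ,
        (g ∈ H ↔ ∃ h ∈ K, (↑g : Matrix (Fin (2*n)) (Fin (2*n)) R) =
          onePerp B * (h : Matrix (Fin (2*n)) (Fin (2*n)) R) * onePerp A) := by
    intro H K hcond g
    constructor
    · intro hg
      refine ⟨MulAut.conj Eu g, (hcond g).mp hg, ?_⟩
      rw [hx g, hsand']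
    · rintro ⟨h, hh, hgh⟩
      have hg : g = Eu⁻¹ * h * Eu := by
        apply Units.ext
        rw [hgh]
        simp [Units.val_mul, hEuv, hEuinv]
      have hc2 : MulAut.conj Eu g = h := by
        rw [hg, MulAut.conj_apply]
        group
      exact (hcond g).mpr (hc2 ▸ hh)
  exact ⟨pack _ _ hSp, pack _ _ hEsp⟩

end PaperESp
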